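/- Let p be a prime and let ψ : ℚ_p → ℂ be an additive character of conductor ℤ_p. Let φ : GL₂(ℚ_p) → ℂ be a function such that φ([[1,x],[0,1]]·g) = ψ(−x)·φ(g) for all x ∈ ℚ_p and g ∈ GL₂(ℚ_p), and φ(g·k) = φ(g) for all g ∈ GL₂(ℚ_p) and all k ∈ GL₂(ℤ_p). Then φ(diag(α,1)) = 0 for every α ∈ ℚ_pˣ with ‖α‖ > 1. -/

import Mathlib

open Matrix

/-- a function on `GL₂(ℚ_p)` transforming under the upper unipotent
subgroup by `ψ(−x)` (with `ψ` of conductor `ℤ_p`) and right-invariant under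
`GL₂(ℤ_p)` vanishes at `diag(α,1)` whenever `‖α‖ > 1`. -/
theorem stmt_12 (p : ℕ) [Fact p.Prime]
    (ψ : ℚ_[p] → ℂ)
    (hψadd : ∀ x y : ℚ_[p], ψ (x + y) = ψ x * ψ y)
    (hψ1 : ∀ x : ℚ_[p], ‖x‖ ≤ 1 → ψ x = 1)
    (hψnt : ∃ x : ℚ_[p], ‖x‖ = (p : ℝ) ∧ ψ x ≠ 1)
    (φ : Matrix (Fin 2) (Fin 2) ℚ_[p] → ℂ)
    (hφN : ∀ (x : ℚ_[p]) (g : Matrix (Fin 2) (Fin 2) ℚ_[p]),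
      φ (!![1, x; 0, 1] * g) = ψ (-x) * φ g)
    (hφK : ∀ (g k : Matrix (Fin 2) (Fin 2) ℚ_[p]),
      (∀ i j, ‖k i j‖ ≤ 1) → ‖k.det‖ = 1 → φ (g * k) = φ g) :
    ∀ α : ℚ_[p], 1 < ‖α‖ → φ !![α, 0; 0, 1] = 0 := by
  intro α hα
  obtain ⟨x₀, hx₀n, hx₀ψ⟩ := hψnt
  have hp1 : (1 : ℝ) < p := by exact_mod_cast (Fact.out : p.Prime).one_lt
  have hα0 : α ≠ 0 := by
    intro h; rw [h, norm_zero] at hα; linarith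
  -- ‖α‖ ≥ p
  have hpα : (p : ℝ) ≤ ‖α‖ := by
    rw [Padic.norm_eq_zpow_neg_valuation hα0] at hα ⊢
    have : α.valuation ≤ -1 := by
      by_contra h
      push_neg at h
      have : 0 ≤ α.valuation := by omega
      have : (p : ℝ) ^ (-α.valuation) ≤ 1 := by
        apply zpow_le_one_of_nonpos₀ (le_of_lt hp1)
        omega
      linarith
    calc (p : ℝ) = (p : ℝ) ^ (1 : ℤ) := by simp
      _ ≤ (p : ℝ) ^ (-α.valuation) := by
        apply zpow_le_zpow_right₀ (le_of_lt hp1); omega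
  have hu : ‖-x₀ / α‖ ≤ 1 := by
    rw [norm_div, norm_neg, hx₀n]
    rw [div_le_one (by linarith)]
    exact hpα
  set g : Matrix (Fin 2) (Fin 2) ℚ_[p] := !![α, 0; 0, 1]
  set k : Matrix (Fin 2) (Fin 2) ℚ_[p] := !![1, -x₀ / α; 0, 1]
  have hmul : !![(1 : ℚ_[p]), -x₀; 0, 1] * g = g * k := by
    ext i j
    fin_cases i <;> fin_cases j <;> simp [g, k, Matrix.mul_fin_two] <;> field_simp <;> ring
  have h1 : φ (!![(1 : ℚ_[p]), -x₀; 0, 1] * g) = ψ x₀ * φ g := by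
    rw [hφN]; ring_nf
  have h2 : φ (g * k) = φ g := by
    apply hφK
    · intro i j
      have hu' : ‖x₀‖ / ‖α‖ ≤ 1 := by
        rw [norm_div, norm_neg] at hu; exact hu
      fin_cases i <;> fin_cases j <;> simp [k, hu, hu']
    · simp [k, Matrix.det_fin_two_of]
  rw [hmul, h2] at h1
  have : (ψ x₀ - 1) * φ g = 0 := by rw [sub_mul]; rw [← h1]; ring
  rcases mul_eq_zero.mp this with h | h
  · exact absurd (sub_eq_zero.mp h) hx₀ψ
  · exact h
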